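/- The A-linear map μ : M → A/(z̄₁ + t̄, z̄₂ − t̄, θ̄₁ + θ̄₂) determined on generators by s₁ ↦ −t̄, s₂ ↦ t̄, s₀ ↦ θ̄₁ is well defined and annihilates the cyclic submodule A·(s₁ + s₂); the induced ℂ[t]-linear map from M/A·(s₁+s₂) to A/(z̄₁ + t̄, z̄₂ − t̄, θ̄₁ + θ̄₂) sends the basis element s̄₁ to −t·1̄ and the basis element s̄₀ to θ̄₁, i.e. with respect to the ℂ[t]-bases {s̄₁, s̄₀} of the source and {1̄, θ̄₁} of the target it is diagonal with entries (−t, 1). -/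

import Mathlib

open MvPolynomial

noncomputable section

/-- The polynomial ring `ℂ[t,z₁,z₂,θ₁,θ₂]`:
variables `X 0 = t`, `X 1 = z₁`, `X 2 = z₂`, `X 3 = θ₁`, `X 4 = θ₂`. -/
abbrev P5 : Type := MvPolynomial (Fin 5) ℂ

/-- The ideal `(z₁z₂ + t², z₁θ₂ − tθ₁, z₂θ₁ + tθ₂, θ₁θ₂, θ₁², θ₂²)` of relations
of Deligne's miniversal deformation of the NS node. -/
def nsIdeal : Ideal P5 :=
  Ideal.span {X 1 * X 2 + X 0 ^ 2, X 1 * X 4 - X 0 * X 3, X 2 * X 3 + X 0 * X 4,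
    X 3 * X 4, X 3 ^ 2, X 4 ^ 2}

/-- The coordinate ring `A` of Deligne's miniversal deformation of the NS node. -/
abbrev ANode : Type := P5 ⧸ nsIdeal

/-- `t̄ ∈ A`. -/
def tb : ANode := Ideal.Quotient.mk nsIdeal (X 0)
/-- `z̄₁ ∈ A`. -/
def z1 : ANode := Ideal.Quotient.mk nsIdeal (X 1)
/-- `z̄₂ ∈ A`. -/
def z2 : ANode := Ideal.Quotient.mk nsIdeal (X 2)
/-- `θ̄₁ ∈ A`. -/
def th1 : ANode := Ideal.Quotient.mk nsIdeal (X 3)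
/-- `θ̄₂ ∈ A`. -/
def th2 : ANode := Ideal.Quotient.mk nsIdeal (X 4)

/-- `A` as a `ℂ[t]`-algebra via `t ↦ t̄`. -/
instance : Algebra (Polynomial ℂ) ANode := (Polynomial.aeval tb).toRingHom.toAlgebra


set_option synthInstance.maxHeartbeats 400000
set_option maxHeartbeats 1000000

/-- The standard generators of the free module `A³`. -/
def ee (i : Fin 3) : Fin 3 → ANode := Pi.single i 1

/-- The relation vectors defining the local model `M` of the dualizing sheaf `ω_{X/S}`:
generators `s₁ = ee 0`, `s₂ = ee 1`, `s₀ = ee 2`; relations `z₁s₂ = ts₁`, `z₂s₁ = −ts₂`,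
`θ₁s₂ = ts₀`, `θ₂s₁ = ts₀`, `z₁s₀ = θ₁s₁`, `z₂s₀ = −θ₂s₂`, `θ₁s₀ = 0`, `θ₂s₀ = 0`. -/
def omegaRels : Set (Fin 3 → ANode) :=
  { z1 • ee 1 - tb • ee 0,
    z2 • ee 0 + tb • ee 1,
    th1 • ee 1 - tb • ee 2,
    th2 • ee 0 - tb • ee 2,
    z1 • ee 2 - th1 • ee 0,
    z2 • ee 2 + th2 • ee 1,
    th1 • ee 2,
    th2 • ee 2 }

/-- The submodule of relations. -/
def omegaRelMod : Submodule ANode (Fin 3 → ANode) := Submodule.span ANode omegaRels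

/-- The local model `M` of the relative dualizing sheaf `ω_{X/S}`. -/
abbrev M : Type := (Fin 3 → ANode) ⧸ omegaRelMod

/-- The generators of `M`: `s 0 = s₁`, `s 1 = s₂`, `s 2 = s₀`. -/
def s (i : Fin 3) : M := Submodule.Quotient.mk (ee i)

/-- The ideal `(z̄₁ + t̄, z̄₂ − t̄, θ̄₁ + θ̄₂)` cutting out the subscheme `Z`. -/
def zIdeal : Ideal ANode := Ideal.span {z1 + tb, z2 - tb, th1 + th2}

/-- The coordinate ring `𝒢̂ = A/(z̄₁ + t̄, z̄₂ − t̄, θ̄₁ + θ̄₂)` of `Z`. -/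
abbrev ZRing : Type := ANode ⧸ zIdeal

/-- The cyclic submodule `A·(s₁ + s₂)` of `M`. -/
def secSub : Submodule ANode M := Submodule.span ANode {s 0 + s 1}

/-- Auxiliary: the raw linear map `A³ → 𝒢̂`, `(a,b,c) ↦ -a t̄ + b t̄ + c θ̄₁`. -/
def phiMap : (Fin 3 → ANode) →ₗ[ANode] ZRing where
  toFun v := Ideal.Quotient.mk zIdeal (-(v 0 * tb) + v 1 * tb + v 2 * th1)
  map_add' x y := by
    simp only [Pi.add_apply, ← map_add]
    congr 1
    ring
  map_smul' c x := by
    simp only [Pi.smul_apply, smul_eq_mul, RingHom.id_apply]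
    have : c • Ideal.Quotient.mk zIdeal (-(x 0 * tb) + x 1 * tb + x 2 * th1)
        = Ideal.Quotient.mk zIdeal (c * (-(x 0 * tb) + x 1 * tb + x 2 * th1)) := rfl
    rw [this]
    congr 1
    ring

lemma phiMap_apply (v : Fin 3 → ANode) :
    phiMap v = Ideal.Quotient.mk zIdeal (-(v 0 * tb) + v 1 * tb + v 2 * th1) := rfl

lemma zmem1 : z1 + tb ∈ zIdeal := Ideal.subset_span (by simp)
lemma zmem2 : z2 - tb ∈ zIdeal := Ideal.subset_span (by simp)
lemma zmem3 : th1 + th2 ∈ zIdeal := Ideal.subset_span (by simp)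

lemma Arel3 : z2 * th1 + tb * th2 = 0 := by
  have h := (Ideal.Quotient.eq_zero_iff_mem).2
    (Ideal.subset_span (by simp) : (X 2 * X 3 + X 0 * X 4 : P5) ∈ nsIdeal)
  simp [z2, th1, tb, th2, map_add, map_mul] at h ⊢; exact h

lemma Arel4 : th1 * th2 = 0 := by
  have h := (Ideal.Quotient.eq_zero_iff_mem).2
    (Ideal.subset_span (by simp) : (X 3 * X 4 : P5) ∈ nsIdeal)
  simp [th1, th2, map_mul] at h ⊢; exact h

lemma Arel5 : th1 * th1 = 0 := by
  have h := (Ideal.Quotient.eq_zero_iff_mem).2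
    (Ideal.subset_span (by simp) : (X 3 ^ 2 : P5) ∈ nsIdeal)
  simp [th1, map_pow, sq] at h ⊢; exact h

lemma phi_rels : omegaRelMod ≤ LinearMap.ker phiMap := by
  rw [omegaRelMod, Submodule.span_le]
  rintro x hx
  simp only [omegaRels, Set.mem_insert_iff, Set.mem_singleton_iff] at hx
  simp only [SetLike.mem_coe, LinearMap.mem_ker]
  rcases hx with h|h|h|h|h|h|h|h <;> subst h <;>
      rw [phiMap_apply] <;>
      simp only [Pi.sub_apply, Pi.add_apply, Pi.smul_apply, ee, Pi.single_apply,
        smul_eq_mul, Fin.reduceEq, reduceIte, if_true, if_false, mul_zero, mul_one,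
        zero_mul, sub_zero, zero_sub, add_zero, zero_add, neg_neg, neg_zero, sub_self] <;>
      rw [Ideal.Quotient.eq_zero_iff_mem]
  · convert Ideal.mul_mem_left _ tb zmem1 using 1; ring
  · convert Ideal.mul_mem_left _ (-tb) zmem2 using 1; ring
  · convert zIdeal.zero_mem using 2; ring
  · convert Ideal.mul_mem_left _ (-tb) zmem3 using 1; ring
  · convert Ideal.mul_mem_left _ th1 zmem1 using 1; ring
  · convert zIdeal.zero_mem using 2; linear_combination Arel3
  · convert zIdeal.zero_mem using 2; linear_combination Arel5
  · convert zIdeal.zero_mem using 2; linear_combination Arel4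

lemma mu_s0 : phiMap (ee 0) = -(Ideal.Quotient.mk zIdeal tb) := by
  rw [phiMap_apply]; simp [ee, Pi.single_apply]

lemma mu_s1 : phiMap (ee 1) = Ideal.Quotient.mk zIdeal tb := by
  rw [phiMap_apply]; simp [ee, Pi.single_apply]

lemma mu_s2 : phiMap (ee 2) = Ideal.Quotient.mk zIdeal th1 := by
  rw [phiMap_apply]; simp [ee, Pi.single_apply]

/-- multiplication by `s₁` gives a well-defined `A`-linear map
`μ : M → A/(z̄₁+t̄, z̄₂−t̄, θ̄₁+θ̄₂)` with `s₁ ↦ −t̄`, `s₂ ↦ t̄`, `s₀ ↦ θ̄₁`; it kills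
`A·(s₁+s₂)`, and the induced `ℂ[t]`-linear map on `M/A·(s₁+s₂)` is diagonal with
entries `(−t, 1)` in the bases `{s̄₁, s̄₀}` and `{1̄, θ̄₁}`. -/
theorem mult_by_s1_diagonal :
    ∃ μ : M →ₗ[ANode] ZRing,
      μ (s 0) = -(Ideal.Quotient.mk zIdeal tb) ∧
      μ (s 1) = Ideal.Quotient.mk zIdeal tb ∧
      μ (s 2) = Ideal.Quotient.mk zIdeal th1 ∧
      Submodule.span ANode {s 0 + s 1} ≤ LinearMap.ker μ ∧
      ∃ μ' : (M ⧸ secSub) →ₗ[Polynomial ℂ] ZRing,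
        (∀ m : M, μ' (Submodule.Quotient.mk m) = μ m) ∧
        μ' (Submodule.Quotient.mk (s 0)) = -((Polynomial.X : Polynomial ℂ) • (1 : ZRing)) ∧
        μ' (Submodule.Quotient.mk (s 2)) = (1 : Polynomial ℂ) • Ideal.Quotient.mk zIdeal th1 := by
  set mu := omegaRelMod.liftQ phiMap phi_rels with hmu
  have hs : ∀ i, mu (s i) = phiMap (ee i) := fun i => rfl
  have h0 : mu (s 0) = -(Ideal.Quotient.mk zIdeal tb) := by rw [hs]; exact mu_s0
  have h1 : mu (s 1) = Ideal.Quotient.mk zIdeal tb := by rw [hs]; exact mu_s1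
  have h2 : mu (s 2) = Ideal.Quotient.mk zIdeal th1 := by rw [hs]; exact mu_s2
  have hker : Submodule.span ANode {s 0 + s 1} ≤ LinearMap.ker mu := by
    rw [Submodule.span_le]
    rintro x hx
    simp only [Set.mem_singleton_iff] at hx
    subst hx
    simp [LinearMap.mem_ker, map_add, h0, h1]
  refine ⟨mu, h0, h1, h2, hker, ?_⟩
  have hker' : secSub ≤ LinearMap.ker mu := hker
  refine ⟨(secSub.liftQ mu hker').restrictScalars (Polynomial ℂ), fun m => rfl, ?_, ?_⟩
  · have hX : (Polynomial.X : Polynomial ℂ) • (1 : ZRing) = Ideal.Quotient.mk zIdeal tb := by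
      have h1 : (Polynomial.X : Polynomial ℂ) • (1 : ZRing)
          = ((Polynomial.X : Polynomial ℂ) • (1 : ANode)) • (1 : ZRing) := by
        rw [smul_assoc, one_smul]
      have h2 : (Polynomial.X : Polynomial ℂ) • (1 : ANode) = tb := by
        rw [Algebra.smul_def, mul_one]
        show Polynomial.aeval tb (Polynomial.X) = tb
        simp
      rw [h1, h2]
      show Ideal.Quotient.mk zIdeal (tb * 1) = _
      rw [mul_one]
    show mu (s 0) = _
    rw [h0, hX]
  · show mu (s 2) = _
    rw [h2, one_smul]


end
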